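/- Let G be a finite simple graph on n ≥ 1 vertices whose connected components have sizes a_1 ≤ a_2 ≤ … ≤ a_r. Then ᾱ(G) = n if and only if a_i − 1 ≤ a_1 + a_2 + … + a_{i−1} for every i = 1, …, r (where the empty sum for i = 1 is 0). -/

import Mathlib

namespace SimpleGraph

variable {V : Type*}

/-- `G` has an `(s,t)`-bipartite-hole. -/
def HasBipHole (G : SimpleGraph V) (s t : ℕ) : Prop :=
  ∃ S T : Finset V, Disjoint S T ∧ S.card = s ∧ T.card = t ∧
    ∀ a ∈ S, ∀ b ∈ T, ¬ G.Adj a b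

/-- The bipartite-hole-number `ᾱ(G)`. -/
noncomputable def bipHoleNum (G : SimpleGraph V) : ℕ :=
  sInf {k | 0 < k ∧ ∃ s t : ℕ, 0 < s ∧ 0 < t ∧ s + t = k + 1 ∧ ¬ G.HasBipHole s t}

end SimpleGraph

/-- Subset sums: if each term is at most one more than the sum of earlier terms,
then every value up to the total is a subset sum. -/
lemma natSubsetSum (b : ℕ → ℕ) :
    ∀ r : ℕ, (∀ i < r, b i ≤ 1 + ∑ j ∈ Finset.range i, b j) →
    ∀ v ≤ ∑ j ∈ Finset.range r, b j, ∃ I ⊆ Finset.range r, ∑ j ∈ I, b j = v := by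
  intro r
  induction r with
  | zero =>
    intro _ v hv
    simp only [Finset.range_zero, Finset.sum_empty, Nat.le_zero] at hv
    exact ⟨∅, by simp, by simp [hv]⟩
  | succ m ih =>
    intro hcond v hv
    rw [Finset.sum_range_succ] at hv
    by_cases hle : v ≤ ∑ j ∈ Finset.range m, b j
    · obtain ⟨I, hI, hs⟩ := ih (fun i hi => hcond i (by omega)) v hle
      exact ⟨I, hI.trans (Finset.range_subset_range.2 (by omega)), hs⟩
    · push_neg at hle
      have hbm := hcond m (by omega)
      obtain ⟨I, hI, hs⟩ := ih (fun i hi => hcond i (by omega)) (v - b m) (by omega)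
      refine ⟨insert m I, ?_, ?_⟩
      · intro x hx
        rw [Finset.mem_insert] at hx
        rcases hx with rfl | hx
        · simp
        · exact (Finset.range_subset_range.2 (by omega)) (hI hx)
      · rw [Finset.sum_insert (fun hm => absurd (Finset.mem_range.1 (hI hm)) (by omega))]
        omega

/-- Transfer sums over filtered `Fin r` to sums over filtered ranges. -/
lemma finSumFilter {r : ℕ} (a : Fin r → ℕ) (p : Fin r → Prop) [DecidablePred p]
    (b : ℕ → ℕ) (hb : ∀ j : Fin r, b j.val = a j)
    (q : ℕ → Prop) [DecidablePred q] (hq : ∀ j : Fin r, p j ↔ q j.val) :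
    ∑ j ∈ Finset.univ.filter p, a j = ∑ m ∈ (Finset.range r).filter q, b m := by
  rw [Finset.sum_filter, Finset.sum_filter, ← Fin.sum_univ_eq_sum_range]
  exact Finset.sum_congr rfl fun j _ => if_congr (hq j) (hb j).symm rfl

/-- Let `G` be a graph on `n ≥ 1` vertices whose connected components have
sizes `a 0 ≤ a 1 ≤ … ≤ a (r-1)` (listed in nondecreasing order via a bijection `e` between
the components and `Fin r`). Then `ᾱ(G) = n` iff `a i - 1 ≤ ∑_{j < i} a j` for all `i`. -/
theorem stmt8 {V : Type*} [Fintype V] [DecidableEq V] [Nonempty V] (G : SimpleGraph V)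
    (r : ℕ) (a : Fin r → ℕ) (ha : Monotone a)
    (e : G.ConnectedComponent ≃ Fin r)
    (hsize : ∀ c : G.ConnectedComponent, c.supp.ncard = a (e c)) :
    G.bipHoleNum = Fintype.card V ↔
      ∀ i : Fin r, a i - 1 ≤ ∑ j ∈ Finset.univ.filter (fun j => j < i), a j := by
  classical
  set n := Fintype.card V with hn
  set κ : V → Fin r := fun v => e (G.connectedComponentMk v) with hκ
  -- the fiber of `κ` over `i` has cardinality `a i`
  have card_fib : ∀ i : Fin r, (Finset.univ.filter (fun v => κ v = i)).card = a i := by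
    intro i
    have h := hsize (e.symm i)
    rw [e.apply_symm_apply] at h
    rw [← h, Set.ncard_eq_toFinset_card']
    congr 1
    ext v
    simp only [Set.mem_toFinset, SimpleGraph.ConnectedComponent.mem_supp_iff,
      Finset.mem_filter, Finset.mem_univ, true_and, hκ]
    exact ⟨fun hv => by rw [← hv, e.symm_apply_apply],
      fun hv => by rw [hv, e.apply_symm_apply]⟩
  have card_filter : ∀ I : Finset (Fin r),
      (Finset.univ.filter (fun v => κ v ∈ I)).card = ∑ i ∈ I, a i := by
    intro I
    rw [Finset.card_eq_sum_card_fiberwise (f := κ) (s := Finset.univ.filter (fun v => κ v ∈ I)) (t := I)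
      (fun x hx => (Finset.mem_filter.1 hx).2)]
    refine Finset.sum_congr rfl fun i hi => ?_
    rw [← card_fib i]
    congr 1
    ext v
    simp only [Finset.mem_filter, Finset.mem_univ, true_and]
    exact ⟨fun h => h.2, fun h => ⟨h ▸ hi, h⟩⟩
  have htot : ∑ i, a i = n := by
    have h := card_filter Finset.univ
    simp only [Finset.mem_univ, Finset.filter_true, Finset.filter_univ_mem] at h
    rw [← h]
    simp [hn]
  have hnadj : ∀ u v : V, κ u ≠ κ v → ¬ G.Adj u v := by
    intro u v hne hadj
    exact hne (congrArg e (SimpleGraph.ConnectedComponent.sound hadj.reachable))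
  -- construct a hole from a subset sum
  have hole_of : ∀ s t : ℕ, 0 < t → s + t ≤ n →
      (∃ I : Finset (Fin r), ∑ i ∈ I, a i = s) → G.HasBipHole s t := by
    rintro s t ht hst ⟨I, hI⟩
    set S := Finset.univ.filter (fun v => κ v ∈ I) with hS
    have hScard : S.card = s := by rw [hS, card_filter]; exact hI
    have hc : t ≤ Sᶜ.card := by
      rw [Finset.card_compl, hScard]; omega
    obtain ⟨T, hTs, hTcard⟩ := Finset.exists_subset_card_eq hc
    refine ⟨S, T, (disjoint_compl_right).mono_right hTs, hScard, hTcard, ?_⟩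
    intro u hu v hv
    apply hnadj
    intro hk
    have hvS : v ∈ S := by
      rw [hS, Finset.mem_filter] at hu ⊢
      exact ⟨Finset.mem_univ v, hk ▸ hu.2⟩
    exact (Finset.mem_compl.1 (hTs hv)) hvS
  have hnpos : 0 < n := Fintype.card_pos
  -- `n` is always in the defining set
  have hmemn : n ∈ {k | 0 < k ∧ ∃ s t : ℕ, 0 < s ∧ 0 < t ∧ s + t = k + 1 ∧
      ¬ G.HasBipHole s t} := by
    refine ⟨hnpos, 1, n, one_pos, hnpos, by omega, ?_⟩
    rintro ⟨S, T, hd, hScard, hTcard, -⟩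
    have h1 : (S ∪ T).card = 1 + n := by
      rw [Finset.card_union_of_disjoint hd, hScard, hTcard]
    have h2 : (S ∪ T).card ≤ n := by
      rw [hn]; exact Finset.card_le_univ _
    omega
  -- characterization of `bipHoleNum = n`
  have key : G.bipHoleNum = n ↔
      ∀ s t : ℕ, 0 < s → 0 < t → s + t ≤ n → G.HasBipHole s t := by
    constructor
    · intro h s t hs ht hst
      by_contra hhole
      have hk : s + t - 1 ∈ {k | 0 < k ∧ ∃ s t : ℕ, 0 < s ∧ 0 < t ∧ s + t = k + 1 ∧
          ¬ G.HasBipHole s t} := ⟨by omega, s, t, hs, ht, by omega, hhole⟩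
      have h2 := Nat.sInf_le hk
      rw [SimpleGraph.bipHoleNum] at h
      omega
    · intro h
      refine le_antisymm (Nat.sInf_le hmemn) (le_csInf ⟨n, hmemn⟩ ?_)
      rintro k ⟨hk, s, t, hs, ht, hst, hhole⟩
      by_contra hlt
      push_neg at hlt
      exact hhole (h s t hs ht (by omega))
  rw [key]
  constructor
  · -- forward: holes for all sizes ⟹ the prefix-sum condition
    intro h i
    by_contra hcon
    push_neg at hcon
    set P := ∑ j ∈ Finset.univ.filter (fun j => j < i), a j with hPdef
    have hai : P + 2 ≤ a i := by omega
    have hge : P + a i ≤ n := by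
      rw [← htot]
      have hsub : insert i (Finset.univ.filter (fun j => j < i)) ⊆ Finset.univ :=
        Finset.subset_univ _
      have h2 : ∑ j ∈ insert i (Finset.univ.filter (fun j => j < i)), a j ≤ ∑ j, a j :=
        Finset.sum_le_sum_of_subset hsub
      rw [Finset.sum_insert (by simp)] at h2
      omega
    obtain ⟨S, T, hd, hScard, hTcard, hnoadj⟩ :=
      h (P + 1) (n - (P + 1)) (by omega) (by omega) (by omega)
    have huniv : S ∪ T = Finset.univ := by
      apply Finset.eq_univ_of_card
      rw [Finset.card_union_of_disjoint hd, hScard, hTcard, ← hn]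
      omega
    -- each component lies wholly in `S` or wholly in `T`
    have hcomp : ∀ u v : V, κ u = κ v → u ∈ S → v ∈ S := by
      intro u v hk hu
      by_contra hv
      have hvT : v ∈ T := by
        have hmem := Finset.mem_univ v
        rw [← huniv, Finset.mem_union] at hmem
        tauto
      have hreach : G.Reachable u v :=
        SimpleGraph.ConnectedComponent.exact (e.injective hk)
      obtain ⟨p⟩ := hreach
      obtain ⟨d, -, hd1, hd2⟩ := p.exists_boundary_dart (S : Set V)
        (Finset.mem_coe.2 hu) (fun hh => hv (Finset.mem_coe.1 hh))
      have hdT : d.snd ∈ T := by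
        have hmem := Finset.mem_univ d.snd
        rw [← huniv, Finset.mem_union] at hmem
        rcases hmem with hm | hm
        · exact absurd (Finset.mem_coe.2 hm) hd2
        · exact hm
      exact hnoadj d.fst (Finset.mem_coe.1 hd1) d.snd hdT d.adj
    have hSeq : S = Finset.univ.filter (fun v => κ v ∈ S.image κ) := by
      ext v
      simp only [Finset.mem_filter, Finset.mem_univ, true_and, Finset.mem_image]
      constructor
      · intro hv; exact ⟨v, hv, rfl⟩
      · rintro ⟨u, hu, hk⟩; exact hcomp u v hk hu
    have hsum : ∑ j ∈ S.image κ, a j = P + 1 := by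
      rw [← card_filter, ← hSeq, hScard]
    by_cases hall : ∀ j ∈ S.image κ, j < i
    · have hle : ∑ j ∈ S.image κ, a j ≤ P := by
        apply Finset.sum_le_sum_of_subset
        intro j hj
        exact Finset.mem_filter.2 ⟨Finset.mem_univ j, hall j hj⟩
      omega
    · push_neg at hall
      obtain ⟨j, hjI, hji⟩ := hall
      have h1 : a i ≤ a j := ha hji
      have h2 : a j ≤ ∑ j ∈ S.image κ, a j :=
        Finset.single_le_sum (fun _ _ => Nat.zero_le _) hjI
      omega
  · -- backward: the prefix-sum condition ⟹ holes for all sizes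
    intro hcond s t hs ht hst
    apply hole_of s t ht hst
    set b : ℕ → ℕ := fun k => if h : k < r then a ⟨k, h⟩ else 0 with hbdef
    have hb : ∀ j : Fin r, b j.val = a j := by
      intro j
      simp only [hbdef, j.isLt, dif_pos, Fin.eta]
    have hbr : ∑ j ∈ Finset.range r, b j = ∑ j, a j := by
      rw [← Fin.sum_univ_eq_sum_range]
      exact Finset.sum_congr rfl fun j _ => hb j
    have hbcond : ∀ k < r, b k ≤ 1 + ∑ j ∈ Finset.range k, b j := by
      intro k hk
      have h1 := hcond ⟨k, hk⟩
      have h2 : ∑ j ∈ Finset.univ.filter (fun j => j < (⟨k, hk⟩ : Fin r)), a j =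
          ∑ m ∈ (Finset.range r).filter (fun m => m < k), b m :=
        finSumFilter a _ b hb _ (fun j => by rw [Fin.lt_def])
      have h3 : (Finset.range r).filter (fun m => m < k) = Finset.range k := by
        ext m
        simp only [Finset.mem_filter, Finset.mem_range]
        omega
      rw [h3] at h2
      rw [← h2]
      have hb0 : b k = a ⟨k, hk⟩ := hb ⟨k, hk⟩
      omega
    obtain ⟨I, hIr, hIsum⟩ := natSubsetSum b r hbcond s (by rw [hbr, htot]; omega)
    refine ⟨Finset.univ.filter (fun j : Fin r => j.val ∈ I), ?_⟩
    have h2 : ∑ j ∈ Finset.univ.filter (fun j : Fin r => j.val ∈ I), a j =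
        ∑ m ∈ (Finset.range r).filter (fun m => m ∈ I), b m :=
      finSumFilter a _ b hb _ (fun j => Iff.rfl)
    have h3 : (Finset.range r).filter (fun m => m ∈ I) = I := by
      ext m
      simp only [Finset.mem_filter, Finset.mem_range]
      exact ⟨fun hh => hh.2, fun hh => ⟨Finset.mem_range.1 (hIr hh), hh⟩⟩
    rw [h2, h3, hIsum]
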